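/- Abstract Wegner-type trace bound: Let H be a lower-semibounded self-adjoint operator with purely discrete spectrum, V a bounded symmetric operator, I ⊂ J ⊂ ℝ intervals, and W a bounded positive symmetric operator with χ_J(H) W χ_J(H) ≥ C₂ χ_J(H) for some C₂ > 0. If ‖V‖ < dist(I, J^c)·√(C₂/(C₂ + 1 + ‖W‖)), then Tr(χ_I(H+V)) ≤ C₃ · Tr(χ_I(H+V)(W + W²)), where C₃ = dist(I,J^c)² / (C₂·dist(I,J^c)² − ‖V‖²·(C₂ + 1 + ‖W‖)). -/

import Mathlib

local notation "⟪" x ", " y "⟫" => @inner ℂ _ _ x y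

/-- abstract Wegner-type trace bound, Theorem 3 of Taeufer–Veselić:
`H` is self-adjoint and lower semibounded with purely discrete spectrum; its
restriction data are encoded as follows: `Q = χ_J(H)` is an orthogonal projection
commuting with `H` whose complement carries a spectral gap of size `d = dist(I, Jᶜ)`
around each `E ∈ I`, and `χ_I(H+V)` is the finite-rank projection onto the span of
an orthonormal eigenbasis `φ_j` of `H+V` with eigenvalues `E_j ∈ I` (so
`Tr χ_I(H+V) = n` and `Tr(χ_I(H+V) X) = Σ_j ⟨φ_j, X φ_j⟩`). `V` is bounded
symmetric, `W` bounded positive symmetric with the UCP `χ_J(H) W χ_J(H) ≥ C₂ χ_J(H)`.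
If `‖V‖ < d √(C₂/(C₂+1+‖W‖))` then
`Tr(χ_I(H+V)) ≤ C₃ Tr(χ_I(H+V)(W+W²))` with
`C₃ = d²/(C₂ d² - ‖V‖²(C₂+1+‖W‖))`. -/
theorem stmt_4
    {𝓗 : Type*} [NormedAddCommGroup 𝓗] [InnerProductSpace ℂ 𝓗] [CompleteSpace 𝓗]
    (H V W Q : 𝓗 →L[ℂ] 𝓗)
    (hH : IsSelfAdjoint H) (hV : IsSelfAdjoint V) (hW : IsSelfAdjoint W)
    (hHbound : ∃ m : ℝ, ∀ x : 𝓗, m * ‖x‖ ^ 2 ≤ (⟪x, H x⟫).re)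
    (hWpos : ∀ x : 𝓗, 0 ≤ (⟪x, W x⟫).re)
    (I J : Set ℝ) (hI : I.OrdConnected) (hJ : J.OrdConnected) (hIJ : I ⊆ J)
    (d : ℝ) (hd : 0 < d) (hdIJ : ∀ E ∈ I, ∀ y ∉ J, d ≤ |E - y|)
    (hQ : IsSelfAdjoint Q) (hQproj : Q ∘L Q = Q) (hQH : H ∘L Q = Q ∘L H)
    (hgap : ∀ E ∈ I, ∀ x : 𝓗,
      d * ‖x - Q x‖ ≤ ‖H (x - Q x) - (E : ℂ) • (x - Q x)‖)
    (C₂ : ℝ) (hC₂ : 0 < C₂)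
    (hUCP : ∀ x : 𝓗, C₂ * (⟪Q x, Q x⟫).re ≤ (⟪Q x, W (Q x)⟫).re)
    (n : ℕ) (φ : Fin n → 𝓗) (hφ : Orthonormal ℂ φ)
    (E : Fin n → ℝ) (hE : ∀ j, E j ∈ I)
    (heig : ∀ j, H (φ j) + V (φ j) = (E j : ℂ) • φ j)
    (hsmall : ‖V‖ < d * Real.sqrt (C₂ / (C₂ + 1 + ‖W‖))) :
    (n : ℝ) ≤ (d ^ 2 / (C₂ * d ^ 2 - ‖V‖ ^ 2 * (C₂ + 1 + ‖W‖))) *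
      (∑ j, ⟪φ j, W (φ j) + W (W (φ j))⟫).re := by
  have hWnn : (0:ℝ) ≤ ‖W‖ := norm_nonneg _
  have hVnn : (0:ℝ) ≤ ‖V‖ := norm_nonneg _
  have hc : (0:ℝ) < C₂ + 1 + ‖W‖ := by linarith
  -- positivity of the denominator
  have hD : (0:ℝ) < C₂ * d ^ 2 - ‖V‖ ^ 2 * (C₂ + 1 + ‖W‖) := by
    have h1 : Real.sqrt (C₂ / (C₂ + 1 + ‖W‖)) ^ 2 = C₂ / (C₂ + 1 + ‖W‖) :=
      Real.sq_sqrt (by positivity)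
    have h2 : ‖V‖ ^ 2 < (d * Real.sqrt (C₂ / (C₂ + 1 + ‖W‖))) ^ 2 := by
      have := mul_self_lt_mul_self hVnn hsmall
      nlinarith
    have h3 : (d * Real.sqrt (C₂ / (C₂ + 1 + ‖W‖))) ^ 2 = d ^ 2 * (C₂ / (C₂ + 1 + ‖W‖)) := by
      rw [mul_pow, h1]
    rw [h3] at h2
    have h4 : ‖V‖ ^ 2 * (C₂ + 1 + ‖W‖) < d ^ 2 * C₂ := by
      have := mul_lt_mul_of_pos_right h2 hc
      calc ‖V‖ ^ 2 * (C₂ + 1 + ‖W‖) < d ^ 2 * (C₂ / (C₂ + 1 + ‖W‖)) * (C₂ + 1 + ‖W‖) := this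
        _ = d ^ 2 * C₂ := by field_simp
    linarith
  -- symmetry of operators (CLM level)
  have hQsym : ∀ a b : 𝓗, ⟪Q a, b⟫ = ⟪a, Q b⟫ := fun a b => hQ.isSymmetric a b
  have hWsym : ∀ a b : 𝓗, ⟪W a, b⟫ = ⟪a, W b⟫ := fun a b => hW.isSymmetric a b
  have hnormsq : ∀ y : 𝓗, (⟪y, y⟫).re = ‖y‖ ^ 2 := fun y => inner_self_eq_norm_sq (𝕜 := ℂ) y
  have hCS : ∀ a b : 𝓗, (⟪a, b⟫).re ≤ ‖a‖ * ‖b‖ := fun a b => re_inner_le_norm (𝕜 := ℂ) a b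
  have hQidem : ∀ y : 𝓗, Q (Q y) = Q y := by
    intro y
    have := congrArg (fun T : 𝓗 →L[ℂ] 𝓗 => T y) hQproj
    simpa using this
  -- contraction property of 1 - Q
  have hcontr : ∀ y : 𝓗, ‖y - Q y‖ ≤ ‖y‖ := by
    intro y
    have hQy : Q (y - Q y) = 0 := by simp [map_sub, hQidem y]
    have h1 : ‖y - Q y‖ ^ 2 = (⟪y, y - Q y⟫).re := by
      rw [← hnormsq (y - Q y)]
      congr 1
      rw [inner_sub_left, hQsym y (y - Q y), hQy, inner_zero_right, sub_zero]
    have h2 : (⟪y, y - Q y⟫).re ≤ ‖y‖ * ‖y - Q y‖ := hCS _ _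
    nlinarith [norm_nonneg (y - Q y), norm_nonneg y, sq_nonneg (‖y - Q y‖ - ‖y‖)]
  -- main per-index estimate
  have key : ∀ j, C₂ * d ^ 2 - ‖V‖ ^ 2 * (C₂ + 1 + ‖W‖) ≤
      d ^ 2 * (⟪φ j, W (φ j) + W (W (φ j))⟫).re := by
    intro j
    set x := φ j with hx
    set ψ := x - Q x with hψ
    have hx1 : ‖x‖ = 1 := by rw [hx]; exact hφ.1 j
    -- gap estimate: d ‖ψ‖ ≤ ‖V‖
    have hcomm : H (Q x) = Q (H x) := by
      have := congrArg (fun T : 𝓗 →L[ℂ] 𝓗 => T x) hQH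
      simpa using this
    have hEx : H x - (E j : ℂ) • x = -(V x) := by
      have := heig j; rw [← hx] at this; rw [← this]; abel
    have hgap1 : d * ‖ψ‖ ≤ ‖V‖ := by
      have h0 := hgap (E j) (hE j) x
      rw [← hψ] at h0
      have heq : H ψ - (E j : ℂ) • ψ
          = (H x - (E j : ℂ) • x) - Q (H x - (E j : ℂ) • x) := by
        simp only [hψ, map_sub, hcomm, smul_sub, map_smul]
        abel
      rw [heq, hEx] at h0
      have heq2 : -(V x) - Q (-(V x)) = -(V x - Q (V x)) := by rw [map_neg]; abel
      rw [heq2, norm_neg] at h0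
      calc d * ‖ψ‖ ≤ ‖V x - Q (V x)‖ := h0
        _ ≤ ‖V x‖ := hcontr (V x)
        _ ≤ ‖V‖ * ‖x‖ := V.le_opNorm x
        _ = ‖V‖ := by rw [hx1, mul_one]
    have hψsq : d ^ 2 * ‖ψ‖ ^ 2 ≤ ‖V‖ ^ 2 := by
      nlinarith [norm_nonneg ψ, mul_nonneg hd.le (norm_nonneg ψ)]
    have hQψ : Q ψ = 0 := by simp [hψ, map_sub, hQidem x]
    -- Pythagoras: ‖Q x‖² = 1 - ‖ψ‖²
    have hpyth : ‖Q x‖ ^ 2 = 1 - ‖ψ‖ ^ 2 := by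
      have hxd : x = Q x + ψ := by simp [hψ]
      have horth : (⟪Q x, ψ⟫).re = 0 := by
        rw [hQsym x ψ, hQψ, inner_zero_right]; simp
      have hsq := norm_add_sq (𝕜 := ℂ) (Q x) ψ
      rw [← hxd, hx1] at hsq
      simp only [RCLike.re_to_complex] at hsq
      rw [horth] at hsq
      nlinarith
    -- UCP
    have hucp : C₂ * (1 - ‖ψ‖ ^ 2) ≤ (⟪Q x, W (Q x)⟫).re := by
      have h0 := hUCP x
      rwa [hnormsq (Q x), hpyth] at h0
    -- expansion of ⟪Q x, W (Q x)⟫ with Q x = x - ψ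
    have hQxd : Q x = x - ψ := by simp [hψ]
    have hexp : (⟪Q x, W (Q x)⟫).re
        = (⟪x, W x⟫).re - 2 * (⟪ψ, W x⟫).re + (⟪ψ, W ψ⟫).re := by
      rw [hQxd]
      have h1 : ⟪x - ψ, W (x - ψ)⟫
          = ⟪x, W x⟫ - ⟪x, W ψ⟫ - ⟪ψ, W x⟫ + ⟪ψ, W ψ⟫ := by
        rw [map_sub, inner_sub_left, inner_sub_right, inner_sub_right]; ring
      rw [h1]
      have h2 : (⟪x, W ψ⟫).re = (⟪ψ, W x⟫).re := by
        rw [← hWsym x ψ]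
        exact inner_re_symm (𝕜 := ℂ) (W x) ψ
      simp only [Complex.add_re, Complex.sub_re]
      rw [h2]; ring
    -- bounds
    have hWx2 : ‖W x‖ ^ 2 = (⟪x, W (W x)⟫).re := by
      rw [← hnormsq (W x)]
      congr 1
      exact hWsym x (W x)
    have hb1 : -(⟪ψ, W x⟫).re ≤ (‖ψ‖ ^ 2 + ‖W x‖ ^ 2) / 2 := by
      have h1 : (⟪ψ, -(W x)⟫).re ≤ ‖ψ‖ * ‖-(W x)‖ := hCS ψ (-(W x))
      rw [inner_neg_right, norm_neg] at h1
      simp only [Complex.neg_re] at h1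
      nlinarith [sq_nonneg (‖ψ‖ - ‖W x‖)]
    have hb2 : (⟪ψ, W ψ⟫).re ≤ ‖W‖ * ‖ψ‖ ^ 2 := by
      calc (⟪ψ, W ψ⟫).re ≤ ‖ψ‖ * ‖W ψ‖ := hCS _ _
        _ ≤ ‖ψ‖ * (‖W‖ * ‖ψ‖) := mul_le_mul_of_nonneg_left (W.le_opNorm ψ) (norm_nonneg ψ)
        _ = ‖W‖ * ‖ψ‖ ^ 2 := by ring
    -- combine
    have hT : (⟪x, W x + W (W x)⟫).re = (⟪x, W x⟫).re + (⟪x, W (W x)⟫).re := by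
      rw [inner_add_right]; simp
    have hmain : C₂ * (1 - ‖ψ‖ ^ 2) ≤
        (⟪x, W x + W (W x)⟫).re + (1 + ‖W‖) * ‖ψ‖ ^ 2 := by
      rw [hT]
      rw [hexp] at hucp
      linarith [hb1, hb2, hWx2]
    have h5 := mul_le_mul_of_nonneg_left hmain (sq_nonneg d)
    have h6 := mul_le_mul_of_nonneg_left hψsq hc.le
    linarith [h5, h6]
  -- sum up
  have hsum : (n : ℝ) * (C₂ * d ^ 2 - ‖V‖ ^ 2 * (C₂ + 1 + ‖W‖)) ≤
      d ^ 2 * (∑ j, ⟪φ j, W (φ j) + W (W (φ j))⟫).re := by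
    have h1 : (∑ j, ⟪φ j, W (φ j) + W (W (φ j))⟫).re
        = ∑ j, (⟪φ j, W (φ j) + W (W (φ j))⟫).re := Complex.re_sum _ _
    rw [h1, Finset.mul_sum]
    calc (n : ℝ) * (C₂ * d ^ 2 - ‖V‖ ^ 2 * (C₂ + 1 + ‖W‖))
        = ∑ _j : Fin n, (C₂ * d ^ 2 - ‖V‖ ^ 2 * (C₂ + 1 + ‖W‖)) := by
          rw [Finset.sum_const, Finset.card_univ, Fintype.card_fin, nsmul_eq_mul]
      _ ≤ ∑ j, d ^ 2 * (⟪φ j, W (φ j) + W (W (φ j))⟫).re :=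
          Finset.sum_le_sum fun j _ => key j
  rw [div_mul_eq_mul_div, le_div_iff₀ hD]
  linarith [hsum]
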